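/- Let {u_k}, {λ_k} be sequences of nonnegative reals and {s_k} a nondecreasing sequence of reals with s_0 ≥ u_0². Suppose for every k ≥ 1 that u_k² ≤ s_k + 2 Σ_{i=1}^k λ_i u_i. Then for every k ≥ 1, u_k ≤ λ̄_k + √(s_k + λ̄_k²), where λ̄_k = Σ_{i=1}^k λ_i. -/
import Mathlib


theorem stmt17 (u lam sSeq : ℕ → ℝ)
    (hu : ∀ k, 0 ≤ u k) (hlam : ∀ k, 0 ≤ lam k)
    (hs : Monotone sSeq) (hs0 : (u 0) ^ 2 ≤ sSeq 0)
    (hrec : ∀ k, 1 ≤ k → (u k) ^ 2 ≤ sSeq k + 2 * ∑ i ∈ Finset.Icc 1 k, lam i * u i) :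
    ∀ k, 1 ≤ k →
      u k ≤ (∑ i ∈ Finset.Icc 1 k, lam i) +
        Real.sqrt (sSeq k + (∑ i ∈ Finset.Icc 1 k, lam i) ^ 2) := by
  intro k hk
  set Λ : ℝ := ∑ i ∈ Finset.Icc 1 k, lam i with hΛ
  have hΛ0 : 0 ≤ Λ := Finset.sum_nonneg fun i _ => hlam i
  have hsk : 0 ≤ sSeq k := le_trans (le_trans (pow_nonneg (hu 0) 2) hs0) (hs (Nat.zero_le k))
  -- pick maximizer of u on Icc 1 k
  have hne : (Finset.Icc 1 k).Nonempty := ⟨k, Finset.mem_Icc.mpr ⟨hk, le_rfl⟩⟩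
  obtain ⟨m, hmmem, hmax⟩ := Finset.exists_max_image (Finset.Icc 1 k) u hne
  obtain ⟨hm1, hmk⟩ := Finset.mem_Icc.mp hmmem
  have hsub : Finset.Icc 1 m ⊆ Finset.Icc 1 k := Finset.Icc_subset_Icc le_rfl hmk
  -- u m ^ 2 ≤ sSeq k + 2 * Λ * u m
  have h1 : (u m) ^ 2 ≤ sSeq k + 2 * Λ * u m := by
    have h2 := hrec m hm1
    have h3 : ∑ i ∈ Finset.Icc 1 m, lam i * u i ≤ ∑ i ∈ Finset.Icc 1 k, lam i * u i :=
      Finset.sum_le_sum_of_subset_of_nonneg hsub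
        (fun i _ _ => mul_nonneg (hlam i) (hu i))
    have h4 : ∑ i ∈ Finset.Icc 1 k, lam i * u i ≤ Λ * u m := by
      rw [hΛ, Finset.sum_mul]
      exact Finset.sum_le_sum fun i hi => mul_le_mul_of_nonneg_left (hmax i hi) (hlam i)
    have h5 : sSeq m ≤ sSeq k := hs hmk
    nlinarith
  -- solve quadratic: u m ≤ Λ + sqrt (sSeq k + Λ^2)
  have hum : u m ≤ Λ + Real.sqrt (sSeq k + Λ ^ 2) := by
    rcases le_or_gt (u m - Λ) 0 with h | h
    · have := Real.sqrt_nonneg (sSeq k + Λ ^ 2); linarith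
    · have hsq : (u m - Λ) ^ 2 ≤ sSeq k + Λ ^ 2 := by nlinarith
      have := (Real.le_sqrt h.le (by positivity)).mpr hsq
      linarith
  have huk : u k ≤ u m := hmax k (Finset.mem_Icc.mpr ⟨hk, le_rfl⟩)
  linarith
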